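/- Let f be a convex size function, let S* be an optimal solution to f-DS, and write s = |S*| (so s ≥ 2). Let S_2* be a maximum weight subset of V of size 2 and let S_n,…,S_1 be the subsets produced by the greedy peeling. Then w(S*)/f(s) ≤ min{ (f(2)/2)/(f(s)/s²), (2f(n)/n)/(f(s)−f(s−1)) } · max{ w(S_2*)/f(2), max_{1≤i≤n} w(S_i)/f(i) }. -/

import Mathlib

structure WGraph (V : Type) [Fintype V] [DecidableEq V] where
  E : Finset (Sym2 V)
  not_diag : ∀ e ∈ E, ¬ e.IsDiag
  w : Sym2 V → ℝ
  w_pos : ∀ e ∈ E, 0 < w e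

variable {V : Type} [Fintype V] [DecidableEq V]

def WGraph.wS (G : WGraph V) (S : Finset V) : ℝ :=
  ∑ e ∈ G.E.filter (fun e => e ∈ S.sym2), G.w e

def WGraph.deg (G : WGraph V) (S : Finset V) (v : V) : ℝ :=
  ∑ u ∈ S.filter (fun u => s(u, v) ∈ G.E), G.w s(u, v)

open Finset

namespace WGraph
variable (G : WGraph V)

lemma wS_nonneg (S : Finset V) : 0 ≤ G.wS S :=
  Finset.sum_nonneg fun e he => (G.w_pos e (mem_filter.mp he).1).le

lemma deg_nonneg (S : Finset V) (v : V) : 0 ≤ G.deg S v :=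
  Finset.sum_nonneg fun u hu => (G.w_pos _ (mem_filter.mp hu).2).le

lemma deg_mono {S T : Finset V} (hST : S ⊆ T) (v : V) : G.deg S v ≤ G.deg T v :=
  Finset.sum_le_sum_of_subset_of_nonneg (filter_subset_filter _ hST)
    (fun e he _ => (G.w_pos _ (mem_filter.mp he).2).le)

lemma handshake (S : Finset V) : ∑ v ∈ S, G.deg S v = 2 * G.wS S := by
  classical
  have h1 : ∑ v ∈ S, G.deg S v
      = ∑ p ∈ (S ×ˢ S).filter (fun p => Sym2.mk.uncurry p ∈ G.E), G.w (Sym2.mk.uncurry p) := by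
    rw [Finset.sum_filter, Finset.sum_product]
    unfold WGraph.deg
    refine Finset.sum_congr rfl fun v _ => ?_
    rw [Finset.sum_filter]
    refine Finset.sum_congr rfl fun u _ => ?_
    rw [show s(u, v) = Sym2.mk.uncurry (v, u) from Sym2.eq_swap]
  rw [h1, Finset.sum_comp G.w Sym2.mk.uncurry]
  have himg : ((S ×ˢ S).filter (fun p => Sym2.mk.uncurry p ∈ G.E)).image Sym2.mk.uncurry
      = G.E.filter (fun e => e ∈ S.sym2) := by
    ext e
    simp only [mem_image, mem_filter, mem_product]
    constructor
    · rintro ⟨⟨a, b⟩, ⟨⟨ha, hb⟩, he⟩, rfl⟩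
      exact ⟨he, Finset.mk_mem_sym2_iff.mpr ⟨ha, hb⟩⟩
    · rintro ⟨he, hs⟩
      induction e using Sym2.ind with
      | _ a b =>
        obtain ⟨ha, hb⟩ := Finset.mk_mem_sym2_iff.mp hs
        exact ⟨(a, b), ⟨⟨ha, hb⟩, he⟩, rfl⟩
  rw [himg, WGraph.wS, Finset.mul_sum]
  refine Finset.sum_congr rfl fun e he => ?_
  revert he
  induction e using Sym2.ind with
  | _ a b =>
    intro he
    obtain ⟨heE, heS⟩ := mem_filter.mp he
    obtain ⟨ha, hb⟩ := Finset.mk_mem_sym2_iff.mp heS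
    have hab : a ≠ b := fun h => G.not_diag _ heE (Sym2.mk_isDiag_iff.mpr h)
    have hfiber : ((S ×ˢ S).filter (fun p => Sym2.mk.uncurry p ∈ G.E)).filter
        (fun p => Sym2.mk.uncurry p = s(a, b)) = {(a, b), (b, a)} := by
      ext p
      simp only [mem_filter, mem_product, mem_insert, mem_singleton]
      constructor
      · rintro ⟨-, hpe⟩
        obtain ⟨x, y⟩ := p
        rcases Sym2.eq_iff.mp hpe with ⟨h1, h2⟩ | ⟨h1, h2⟩
        · left; rw [← h1, ← h2]
        · right; rw [← h1, ← h2]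
      · rintro (rfl | rfl)
        · exact ⟨⟨⟨ha, hb⟩, heE⟩, rfl⟩
        · exact ⟨⟨⟨hb, ha⟩, by rwa [show Sym2.mk.uncurry (b, a) = s(a, b) from Sym2.eq_swap]⟩,
            Sym2.eq_swap⟩
    rw [hfiber]
    have hcard : ({(a, b), (b, a)} : Finset (V × V)).card = 2 :=
      card_pair (by simp [Prod.ext_iff, hab])
    rw [hcard]
    push_cast [nsmul_eq_mul]
    ring

lemma wS_erase (S : Finset V) (v : V) (hv : v ∈ S) :
    G.wS S = G.wS (S.erase v) + G.deg S v := by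
  classical
  have hsplit := Finset.sum_filter_add_sum_filter_not
    (G.E.filter (fun e => e ∈ S.sym2)) (fun e => ¬ v ∈ e) G.w
  have h1 : (G.E.filter (fun e => e ∈ S.sym2)).filter (fun e => ¬ v ∈ e)
      = G.E.filter (fun e => e ∈ (S.erase v).sym2) := by
    ext e
    simp only [mem_filter, Finset.mem_sym2_iff, mem_erase, and_assoc]
    constructor
    · rintro ⟨he, hS, hnv⟩
      exact ⟨he, fun a ha => ⟨fun h => hnv (h ▸ ha), hS a ha⟩⟩
    · rintro ⟨he, h⟩
      exact ⟨he, fun a ha => (h a ha).2, fun hv' => (h v hv').1 rfl⟩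
  have h2 : ∑ e ∈ (G.E.filter (fun e => e ∈ S.sym2)).filter (fun e => ¬ ¬ v ∈ e), G.w e
      = G.deg S v := by
    rw [WGraph.deg]
    rw [show ∑ u ∈ S.filter (fun u => s(u, v) ∈ G.E), G.w s(u, v)
        = ∑ e ∈ (S.filter (fun u => s(u, v) ∈ G.E)).image (fun u => s(u, v)), G.w e from
      (Finset.sum_image (fun x _ y _ h => by
        rcases Sym2.eq_iff.mp h with ⟨h1, -⟩ | ⟨h1, h2⟩
        · exact h1
        · exact h1.trans h2)).symm]
    congr 1
    ext e
    simp only [mem_image, mem_filter, not_not]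
    constructor
    · rintro ⟨⟨he, hS⟩, hve⟩
      obtain ⟨u, hu⟩ := Sym2.mem_iff_exists.mp hve
      subst hu
      refine ⟨u, ⟨?_, ?_⟩, Sym2.eq_swap⟩
      · exact (Finset.mk_mem_sym2_iff.mp hS).2
      · rwa [show s(u, v) = s(v, u) from Sym2.eq_swap]
    · rintro ⟨u, ⟨hu, he⟩, rfl⟩
      exact ⟨⟨he, Finset.mk_mem_sym2_iff.mpr ⟨hu, hv⟩⟩, Sym2.mem_mk_right u v⟩
  unfold WGraph.wS
  rw [← hsplit, h1, h2]

end WGraph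

lemma conv_step (f : ℕ → ℝ) (hf0 : f 0 = 0)
    (hconv : ∀ x : ℕ, 0 ≤ f x - 2 * f (x + 1) + f (x + 2)) :
    ∀ k : ℕ, f k ≤ k * (f (k + 1) - f k) := by
  intro k
  induction k with
  | zero => simp [hf0]
  | succ k ih =>
    have h := hconv k
    push_cast
    nlinarith [Nat.cast_nonneg (α := ℝ) k]

lemma ratio_mono (f : ℕ → ℝ) (hf0 : f 0 = 0)
    (hconv : ∀ x : ℕ, 0 ≤ f x - 2 * f (x + 1) + f (x + 2)) :
    ∀ i j : ℕ, 1 ≤ i → i ≤ j → (j : ℝ) * f i ≤ (i : ℝ) * f j := by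
  intro i j hi hij
  induction j, hij using Nat.le_induction with
  | base => exact le_refl _
  | succ j hij ih =>
    have hj1 : (1 : ℝ) ≤ (j : ℝ) := by exact_mod_cast hi.trans hij
    have h1 : ((j : ℝ) + 1) * f j ≤ (j : ℝ) * f (j + 1) := by
      have := conv_step f hf0 hconv j
      push_cast at this ⊢
      nlinarith
    have hA := mul_le_mul_of_nonneg_left ih (by positivity : (0:ℝ) ≤ (j : ℝ) + 1)
    have hB := mul_le_mul_of_nonneg_left h1 (Nat.cast_nonneg (α := ℝ) i)
    have hC : (j : ℝ) * (((j : ℝ) + 1) * f i) ≤ (j : ℝ) * ((i : ℝ) * f (j + 1)) := by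
      nlinarith
    have := le_of_mul_le_mul_left hC (by linarith : (0:ℝ) < (j : ℝ))
    push_cast
    linarith

lemma diff_mono (f : ℕ → ℝ)
    (hconv : ∀ x : ℕ, 0 ≤ f x - 2 * f (x + 1) + f (x + 2)) :
    Monotone (fun k => f (k + 1) - f k) :=
  monotone_nat_of_le_succ fun k => by have := hconv k; linarith

set_option maxHeartbeats 1000000 in
theorem stmt7 (G : WGraph V) (hE : G.E.Nonempty)
    (n : ℕ) (hn : n = Fintype.card V) (hn1 : 1 ≤ n)
    (f : ℕ → ℝ) (hmono : Monotone f) (hf0 : f 0 = 0) (hfpos : ∀ x, 1 ≤ x → 0 < f x)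
    (hconv : ∀ x : ℕ, 0 ≤ f x - 2 * f (x + 1) + f (x + 2))
    (Sstar : Finset V) (hne : Sstar.Nonempty)
    (hopt : ∀ S : Finset V, S.Nonempty → G.wS S / f S.card ≤ G.wS Sstar / f Sstar.card)
    (s : ℕ) (hs : s = Sstar.card)
    (S2 : Finset V) (hS2 : S2.card = 2)
    (hS2max : ∀ S : Finset V, S.card = 2 → G.wS S ≤ G.wS S2)
    (Ss : ℕ → Finset V) (hSn : Ss n = Finset.univ)
    (hpeel : ∀ i, 2 ≤ i → i ≤ n → ∃ v ∈ Ss i,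
      (∀ u ∈ Ss i, G.deg (Ss i) v ≤ G.deg (Ss i) u) ∧ Ss (i - 1) = (Ss i).erase v) :
    G.wS Sstar / f s ≤
      min ((f 2 / 2) / (f s / (s : ℝ) ^ 2)) ((2 * f n / (n : ℝ)) / (f s - f (s - 1))) *
        max (G.wS S2 / f 2)
          ((Finset.Icc 1 n).sup' (Finset.nonempty_Icc.mpr hn1) fun i => G.wS (Ss i) / f i) := by
  classical
  have hf2 : 0 < f 2 := hfpos 2 (by norm_num)
  have hfn : 0 < f n := hfpos n hn1
  have hS2nonneg : 0 ≤ G.wS S2 := G.wS_nonneg S2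
  -- every edge weight is at most wS S2
  have hwle : ∀ e ∈ G.E, G.w e ≤ G.wS S2 := by
    intro e
    induction e using Sym2.ind with
    | _ a b =>
      intro he
      have hab : a ≠ b := fun h => G.not_diag _ he (Sym2.mk_isDiag_iff.mpr h)
      have h1 : G.w s(a, b) ≤ G.wS {a, b} := by
        refine Finset.single_le_sum (f := fun e => G.w e)
          (fun e' he' => (G.w_pos _ (mem_filter.mp he').1).le) ?_
        exact mem_filter.mpr ⟨he, Finset.mk_mem_sym2_iff.mpr ⟨by simp, by simp⟩⟩
      exact h1.trans (hS2max _ (card_pair hab))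
  have hs1 : 1 ≤ s := hs ▸ hne.card_pos
  have hfs : 0 < f s := hfpos s hs1
  -- wS Sstar is positive, hence s ≥ 2
  have hstar_pos : 0 < G.wS Sstar := by
    obtain ⟨e0, he0⟩ := hE
    revert he0
    induction e0 using Sym2.ind with
    | _ a b =>
      intro he0
      have hab : a ≠ b := fun h => G.not_diag _ he0 (Sym2.mk_isDiag_iff.mpr h)
      have hpair : 0 < G.wS {a, b} := by
        refine lt_of_lt_of_le (G.w_pos _ he0) ?_
        refine Finset.single_le_sum (f := fun e => G.w e)
          (fun e' he' => (G.w_pos _ (mem_filter.mp he').1).le) ?_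
        exact mem_filter.mpr ⟨he0, Finset.mk_mem_sym2_iff.mpr ⟨by simp, by simp⟩⟩
      have hd := hopt {a, b} ⟨a, by simp⟩
      rw [card_pair hab, ← hs] at hd
      have : 0 < G.wS Sstar / f s := lt_of_lt_of_le (div_pos hpair hf2) hd
      have h2 : G.wS Sstar = G.wS Sstar / f s * f s := (div_mul_cancel₀ _ hfs.ne').symm
      rw [h2]; exact mul_pos this hfs
  have hs2 : 2 ≤ s := by
    by_contra hcon
    have hseq : Sstar.card = 1 := by omega
    obtain ⟨v, hv⟩ := Finset.card_eq_one.mp hseq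
    have hz : G.wS Sstar = 0 := by
      rw [hv]
      unfold WGraph.wS
      rw [Finset.filter_eq_empty_iff.mpr, Finset.sum_empty]
      intro e heE
      intro hmem
      refine G.not_diag e heE ?_
      revert hmem
      induction e using Sym2.ind with
      | _ a b =>
        intro hmem
        obtain ⟨ha, hb⟩ := Finset.mk_mem_sym2_iff.mp hmem
        simp only [Finset.mem_singleton] at ha hb
        rw [Sym2.mk_isDiag_iff, ha, hb]
    linarith
  -- Bound A : 2 * wS Sstar ≤ s^2 * wS S2
  have hdegA : ∀ v ∈ Sstar, G.deg Sstar v ≤ (s : ℝ) * G.wS S2 := by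
    intro v hv
    calc G.deg Sstar v
        ≤ (Sstar.filter (fun u => s(u, v) ∈ G.E)).card • G.wS S2 :=
          Finset.sum_le_card_nsmul _ _ _ (fun u hu => hwle _ (mem_filter.mp hu).2)
      _ ≤ (s : ℝ) * G.wS S2 := by
          rw [nsmul_eq_mul]
          refine mul_le_mul_of_nonneg_right ?_ hS2nonneg
          exact_mod_cast (Finset.card_filter_le _ _).trans_eq hs.symm
  have hA1 : 2 * G.wS Sstar ≤ (s : ℝ) ^ 2 * G.wS S2 := by
    rw [← G.handshake Sstar]
    calc ∑ v ∈ Sstar, G.deg Sstar v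
        ≤ Sstar.card • ((s : ℝ) * G.wS S2) := Finset.sum_le_card_nsmul _ _ _ hdegA
      _ = (s : ℝ) ^ 2 * G.wS S2 := by rw [nsmul_eq_mul, ← hs]; ring
  -- cardinalities along the peeling
  have hcard : ∀ i, 1 ≤ i → i ≤ n → (Ss i).card = i := by
    have haux : ∀ d, d ≤ n - 1 → (Ss (n - d)).card = n - d := by
      intro d
      induction d with
      | zero => intro _; simp only [Nat.sub_zero, hSn, Finset.card_univ, ← hn]
      | succ d ih =>
        intro hd
        obtain ⟨v, hvmem, -, hSs⟩ := hpeel (n - d) (by omega) (by omega)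
        rw [show n - (d + 1) = (n - d) - 1 from by omega, hSs,
          Finset.card_erase_of_mem hvmem, ih (by omega)]
    intro i h1 h2
    have := haux (n - i) (by omega)
    rwa [show n - (n - i) = i from by omega] at this
  -- the peeling index
  set I := (Finset.Icc 1 n).filter (fun i => Sstar ⊆ Ss i) with hI
  have hnI : n ∈ I := mem_filter.mpr
    ⟨Finset.mem_Icc.mpr ⟨hn1, le_refl n⟩, by rw [hSn]; exact Finset.subset_univ _⟩
  have hIne : I.Nonempty := ⟨n, hnI⟩
  set i0 := I.min' hIne with hi0
  have hi0I : i0 ∈ I := Finset.min'_mem I hIne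
  obtain ⟨hi0Icc, hsub⟩ := mem_filter.mp hi0I
  obtain ⟨hi0a, hi0b⟩ := Finset.mem_Icc.mp hi0Icc
  have hci0 : (Ss i0).card = i0 := hcard i0 hi0a hi0b
  have hsle : s ≤ i0 := by rw [hs, ← hci0]; exact Finset.card_le_card hsub
  have hi02 : 2 ≤ i0 := le_trans hs2 hsle
  obtain ⟨v, hvmem, hmin, hSs⟩ := hpeel i0 hi02 hi0b
  have hvstar : v ∈ Sstar := by
    by_contra hv
    have hsub' : Sstar ⊆ Ss (i0 - 1) := by
      rw [hSs]; exact Finset.subset_erase.mpr ⟨hsub, hv⟩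
    have hmem : i0 - 1 ∈ I := mem_filter.mpr
      ⟨Finset.mem_Icc.mpr ⟨by omega, by omega⟩, hsub'⟩
    have := Finset.min'_le I _ hmem
    omega
  -- min-degree lower bound from optimality
  have herase_ne : (Sstar.erase v).Nonempty := by
    rw [← Finset.card_pos, Finset.card_erase_of_mem hvstar]; omega
  have hcerase : (Sstar.erase v).card = s - 1 := by
    rw [Finset.card_erase_of_mem hvstar, hs]
  have hfs1 : 0 < f (s - 1) := hfpos _ (by omega)
  have hdiff : 0 < f s - f (s - 1) := by
    have h0 := diff_mono f hconv (Nat.zero_le (s - 1))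
    simp only [Nat.zero_add, hf0, sub_zero] at h0
    have h1 := hfpos 1 (le_refl 1)
    have : s - 1 + 1 = s := by omega
    rw [this] at h0
    linarith
  have hopt' := hopt _ herase_ne
  rw [hcerase, ← hs] at hopt'
  have hwe := G.wS_erase Sstar v hvstar
  have hkey1 : G.wS Sstar * (f s - f (s - 1)) ≤ f s * G.deg Sstar v := by
    have h := (div_le_div_iff₀ hfs1 hfs).mp hopt'
    nlinarith
  have hkey2 : G.deg Sstar v ≤ G.deg (Ss i0) v := G.deg_mono hsub v
  have hkey3 : (i0 : ℝ) * G.deg (Ss i0) v ≤ 2 * G.wS (Ss i0) := by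
    rw [← G.handshake (Ss i0)]
    calc (i0 : ℝ) * G.deg (Ss i0) v
        = (Ss i0).card • G.deg (Ss i0) v := by rw [nsmul_eq_mul, hci0]
      _ ≤ ∑ u ∈ Ss i0, G.deg (Ss i0) u :=
          Finset.card_nsmul_le_sum _ _ _ (fun u hu => hmin u hu)
  have hfi0 : 0 < f i0 := hfpos i0 hi0a
  have hn0 : (0 : ℝ) < n := by exact_mod_cast hn1
  have hi00 : (0 : ℝ) < i0 := by exact_mod_cast hi0a
  have hs0 : (0 : ℝ) < s := by exact_mod_cast hs1
  have hc2 : (n : ℝ) * f i0 ≤ (i0 : ℝ) * f n := ratio_mono f hf0 hconv i0 n hi0a hi0b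
  -- bound B assembled
  have hB : G.wS Sstar / f s ≤
      (2 * f n / n) / (f s - f (s - 1)) * (G.wS (Ss i0) / f i0) := by
    have hrw : (2 * f n / n) / (f s - f (s - 1)) * (G.wS (Ss i0) / f i0)
        = (2 * f n * G.wS (Ss i0)) / ((n : ℝ) * (f s - f (s - 1)) * f i0) := by
      field_simp
    rw [hrw, div_le_div_iff₀ hfs (mul_pos (mul_pos hn0 hdiff) hfi0)]
    have c1 : (i0 : ℝ) * (G.wS Sstar * (f s - f (s - 1))) ≤ f s * (2 * G.wS (Ss i0)) := by
      calc (i0 : ℝ) * (G.wS Sstar * (f s - f (s - 1)))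
          ≤ (i0 : ℝ) * (f s * G.deg Sstar v) :=
            mul_le_mul_of_nonneg_left hkey1 hi00.le
        _ ≤ (i0 : ℝ) * (f s * G.deg (Ss i0) v) :=
            mul_le_mul_of_nonneg_left (mul_le_mul_of_nonneg_left hkey2 hfs.le) hi00.le
        _ = f s * ((i0 : ℝ) * G.deg (Ss i0) v) := by ring
        _ ≤ f s * (2 * G.wS (Ss i0)) := mul_le_mul_of_nonneg_left hkey3 hfs.le
    have hWD : 0 ≤ G.wS Sstar * (f s - f (s - 1)) :=
      mul_nonneg (G.wS_nonneg _) hdiff.le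
    nlinarith [mul_le_mul_of_nonneg_right hc2 hWD,
      mul_le_mul_of_nonneg_left c1 hfn.le]
  -- bound A assembled
  have hAineq : G.wS Sstar / f s ≤
      (f 2 / 2) / (f s / (s : ℝ) ^ 2) * (G.wS S2 / f 2) := by
    have hrw : (f 2 / 2) / (f s / (s : ℝ) ^ 2) * (G.wS S2 / f 2)
        = ((s : ℝ) ^ 2 * G.wS S2) / (2 * f s) := by
      field_simp
    rw [hrw, div_le_div_iff₀ hfs (by linarith : (0:ℝ) < 2 * f s)]
    nlinarith [mul_le_mul_of_nonneg_right hA1 hfs.le]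
  -- combine
  set M1 := G.wS S2 / f 2 with hM1
  set M2 := (Finset.Icc 1 n).sup' (Finset.nonempty_Icc.mpr hn1) (fun i => G.wS (Ss i) / f i)
    with hM2
  have hM2ge : G.wS (Ss i0) / f i0 ≤ M2 :=
    Finset.le_sup' (fun i => G.wS (Ss i) / f i) (Finset.mem_Icc.mpr ⟨hi0a, hi0b⟩)
  have hApos : 0 ≤ (f 2 / 2) / (f s / (s : ℝ) ^ 2) :=
    div_nonneg (div_nonneg hf2.le (by norm_num)) (div_nonneg hfs.le (sq_nonneg _))
  have hBpos : 0 ≤ (2 * f n / n) / (f s - f (s - 1)) :=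
    div_nonneg (div_nonneg (by linarith) hn0.le) hdiff.le
  have hMnn : 0 ≤ max M1 M2 :=
    le_trans (div_nonneg hS2nonneg hf2.le) (le_max_left _ _)
  rw [min_mul_of_nonneg _ _ hMnn]
  refine le_min ?_ ?_
  · exact hAineq.trans (mul_le_mul_of_nonneg_left (le_max_left _ _) hApos)
  · exact (hB.trans (mul_le_mul_of_nonneg_left hM2ge hBpos)).trans
      (mul_le_mul_of_nonneg_left (le_max_right _ _) hBpos)
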